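/- Let T be a triangulated category, E a class of objects, and J the class of cophantom morphisms (f : X → Y with Hom(f, C) = 0 for all C ∈ E). Let n > 0 and let C be an object that is a direct summand of an object built as an n-fold extension of products of objects of E. Then for any morphism f : X → Y in J^n (an n-fold composite of cophantom morphisms), the induced map Hom_T(Y, C) → Hom_T(X, C) is zero. -/

import Mathlib

/-!
STATEMENT 15: Let `T` be a triangulated category, `E` a class of objects, and
`J` the class of cophantom morphisms (those `f : X ⟶ Y` with
`Hom(f, C) = 0` for all `C ∈ E`).  Let `n > 0` and let `C` be an object of
`[E]-bar_n` (a direct summand of an object built as an `n`-fold extension of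
products of objects of `E`).  Then for any morphism `f : X ⟶ Y` in `J^n`
(an `n`-fold composite of cophantom morphisms), the induced map
`Hom_T(Y, C) → Hom_T(X, C)` is zero.
-/

open CategoryTheory CategoryTheory.Limits CategoryTheory.Pretriangulated
  CategoryTheory.Triangulated

section

variable {C : Type u} [Category.{v} C] [Preadditive C] [HasZeroObject C]
  [HasShift C ℤ] [∀ (n : ℤ), (shiftFunctor C n).Additive] [Pretriangulated C]

/-- A morphism is cophantom w.r.t. a class `E` if every composite into an
object of `E` vanishes. -/
def Cophantom (E : C → Prop) {X Y : C} (f : X ⟶ Y) : Prop :=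
  ∀ (Z : C), E Z → ∀ g : Y ⟶ Z, f ≫ g = 0

/-- `IsNCophantom E n f` says `f` is a composite of `n` cophantom morphisms. -/
inductive IsNCophantom (E : C → Prop) : ℕ → ∀ {X Y : C}, (X ⟶ Y) → Prop where
  | one {X Y : C} (f : X ⟶ Y) (hf : Cophantom E f) : IsNCophantom E 1 f
  | comp {n : ℕ} {X Y Z : C} (f : X ⟶ Y) (g : Y ⟶ Z) (hf : Cophantom E f)
      (hg : IsNCophantom E n g) : IsNCophantom E (n + 1) (f ≫ g)

/-- `BarClosure E n X` : `X` belongs to `[E]-bar_n`, i.e. `X` is a direct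
summand of an `n`-fold extension of products of objects of `E`. -/
inductive BarClosure (E : C → Prop) : ℕ → C → Prop where
  | prodSummand {ι : Type v} (Y : ι → C) [HasProduct Y] (hY : ∀ i, E (Y i))
      (X : C) (s : X ⟶ ∏ᶜ Y) (r : ∏ᶜ Y ⟶ X) (hr : s ≫ r = 𝟙 X) :
      BarClosure E 1 X
  | extSummand {n : ℕ} {C₁ Z C₂ X : C} (f : C₁ ⟶ Z) (g : Z ⟶ C₂)
      (h : C₂ ⟶ C₁⟦(1 : ℤ)⟧) (hdist : Triangle.mk f g h ∈ distTriang C)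
      (h₁ : BarClosure E 1 C₁) (h₂ : BarClosure E n C₂)
      (s : X ⟶ Z) (r : Z ⟶ X) (hr : s ≫ r = 𝟙 X) :
      BarClosure E (n + 1) X

lemma barClosure_zero_false (E : C → Prop) (X : C) (h : BarClosure E 0 X) : False := by
  cases h

lemma isNCophantom_pos {E : C → Prop} {n : ℕ} {X Y : C} {f : X ⟶ Y}
    (hf : IsNCophantom E n f) : 0 < n := by
  cases hf <;> exact Nat.succ_pos _

lemma isNCophantom_cophantom {E : C → Prop} {n : ℕ} {X Y : C} {f : X ⟶ Y}
    (hf : IsNCophantom E n f) : Cophantom E f := by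
  induction hf with
  | one f hf => exact hf
  | comp f g hf hg ih => exact fun Z hZ k => by rw [Category.assoc]; exact hf Z hZ (g ≫ k)

lemma cophantom_bar1 {E : C → Prop} {W : C} (hW : BarClosure E 1 W)
    {X Y : C} {f : X ⟶ Y} (hf : Cophantom E f) (g : Y ⟶ W) : f ≫ g = 0 := by
  cases hW with
  | prodSummand Z hZ W s r hr =>
    have h0 : f ≫ g ≫ s = 0 := by
      apply limit.hom_ext
      intro j
      simpa using hf _ (hZ j.as) (g ≫ s ≫ limit.π _ j)
    calc f ≫ g = f ≫ g ≫ s ≫ r := by rw [hr, Category.comp_id]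
    _ = (f ≫ g ≫ s) ≫ r := by simp
    _ = 0 := by rw [h0, zero_comp]
  | extSummand f' g' h' hdist h₁ h₂ s r hr =>
    exact absurd h₂ (fun h => barClosure_zero_false E _ h)

theorem stmt15 (E : C → Prop) (n : ℕ) (hn : 0 < n)
    (Cobj : C) (hC : BarClosure E n Cobj)
    {X Y : C} (f : X ⟶ Y) (hf : IsNCophantom E n f) :
    ∀ g : Y ⟶ Cobj, f ≫ g = 0 := by
  induction hC generalizing X Y f with
  | prodSummand Z hZ W s r hr =>
    exact cophantom_bar1 (BarClosure.prodSummand Z hZ W s r hr)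
      (isNCophantom_cophantom hf)
  | @extSummand m C₁ Z C₂ W u v w hdist h₁ h₂ s r hr ih₁ ih₂ =>
    intro g
    cases hf with
    | one f hf0 =>
      exact absurd h₂ (fun h => barClosure_zero_false E _ h)
    | @comp m' X Y' Y f₁ f₂ hf₁ hf₂ =>
      have hz : f₂ ≫ (g ≫ s) ≫ v = 0 :=
        ih₂ (isNCophantom_pos hf₂) f₂ hf₂ ((g ≫ s) ≫ v)
      obtain ⟨e, he⟩ := Triangle.coyoneda_exact₂ _ hdist (f₂ ≫ g ≫ s)
        (by exact (Category.assoc _ _ _).trans hz)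
      have h1 : f₁ ≫ e ≫ u = 0 := by
        refine (Category.assoc f₁ e u).symm.trans ?_
        exact (congrArg (fun t => t ≫ u) (cophantom_bar1 h₁ hf₁ e)).trans zero_comp
      have : (f₁ ≫ f₂) ≫ g ≫ s = 0 := by
        rw [Category.assoc]
        exact (congrArg (fun t => f₁ ≫ t) he).trans h1
      calc (f₁ ≫ f₂) ≫ g = (f₁ ≫ f₂) ≫ g ≫ s ≫ r := by rw [hr, Category.comp_id]
      _ = ((f₁ ≫ f₂) ≫ g ≫ s) ≫ r := by simp
      _ = 0 := by rw [this, zero_comp]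

end
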